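/- Let q be a natural number with q ≥ 6 and suppose G is a C₄-free simple graph on q²+q vertices with exactly (1/2)·q·(q+1)² − q + 1 edges. Then every vertex v of G whose degree δ satisfies 2δ ≤ q+2 (i.e., δ ≤ q/2 + 1) is adjacent to every vertex of G of degree q+2. -/

import Mathlib

open Finset

set_option linter.unusedSectionVars false
set_option maxHeartbeats 1000000

/-- A simple graph is `C₄`-free iff no two distinct vertices have two or more
common neighbors. -/
def C4Free {V : Type*} (G : SimpleGraph V) : Prop :=
  ∀ u v : V, u ≠ v → {w : V | G.Adj u w ∧ G.Adj v w}.Subsingleton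

namespace C4Aux

variable {V : Type*} [Fintype V] [DecidableEq V] (G : SimpleGraph V) [DecidableRel G.Adj]

def cn (a b : V) : ℕ := (univ.filter fun c => G.Adj a c ∧ G.Adj b c).card

variable {G}

lemma cn_le_one (hG : C4Free G) {a b : V} (h : a ≠ b) : cn G a b ≤ 1 := by
  apply Finset.card_le_one.mpr
  intro x hx y hy
  simp only [cn, mem_filter] at hx hy
  exact hG a b h hx.2 hy.2

lemma cn_comm (a b : V) : cn G a b = cn G b a := by
  unfold cn; congr 1; ext c; simp [and_comm]

lemma degree_eq_card_filter_left (c : V) :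
    (univ.filter fun x => G.Adj x c).card = G.degree c := by
  rw [← SimpleGraph.card_neighborFinset_eq_degree]
  congr 1; ext x; simp [SimpleGraph.mem_neighborFinset, SimpleGraph.adj_comm]

lemma cn_self (a : V) : cn G a a = G.degree a := by
  unfold cn
  rw [← SimpleGraph.card_neighborFinset_eq_degree]
  congr 1; ext c; simp [SimpleGraph.mem_neighborFinset]

lemma cn_eq_sum (a b : V) :
    cn G a b = ∑ c, (if G.Adj a c then 1 else 0) * (if G.Adj b c then 1 else 0) := by
  unfold cn
  rw [Finset.card_filter]
  refine Finset.sum_congr rfl fun c _ => ?_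
  by_cases h1 : G.Adj a c <;> by_cases h2 : G.Adj b c <;> simp [h1, h2]

lemma sum_sum_cn (S T : Finset V) :
    ∑ x ∈ S, ∑ w ∈ T, cn G x w
      = ∑ c, (S.filter fun x => G.Adj x c).card * (T.filter fun w => G.Adj w c).card := by
  simp only [cn_eq_sum]
  calc ∑ x ∈ S, ∑ w ∈ T, ∑ c, (if G.Adj x c then 1 else 0) * (if G.Adj w c then 1 else 0)
      = ∑ x ∈ S, ∑ c, ∑ w ∈ T, (if G.Adj x c then 1 else 0) * (if G.Adj w c then 1 else 0) := by
        refine Finset.sum_congr rfl fun x _ => Finset.sum_comm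
    _ = ∑ c, ∑ x ∈ S, ∑ w ∈ T, (if G.Adj x c then 1 else 0) * (if G.Adj w c then 1 else 0) :=
        Finset.sum_comm
    _ = ∑ c, (∑ x ∈ S, (if G.Adj x c then 1 else 0)) * (∑ w ∈ T, (if G.Adj w c then 1 else 0)) := by
        refine Finset.sum_congr rfl fun c _ => ?_
        rw [Finset.sum_mul_sum]
    _ = ∑ c, (S.filter fun x => G.Adj x c).card * (T.filter fun w => G.Adj w c).card := by
        refine Finset.sum_congr rfl fun c _ => ?_
        rw [Finset.sum_boole, Finset.sum_boole]
        norm_num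

lemma sum_cn_row (a : V) :
    ∑ w, cn G a w = ∑ c ∈ G.neighborFinset a, G.degree c := by
  have h := sum_sum_cn (G := G) {a} univ
  simp only [Finset.sum_singleton] at h
  rw [h]
  rw [SimpleGraph.neighborFinset_eq_filter, Finset.sum_filter]
  refine Finset.sum_congr rfl fun c _ => ?_
  rw [degree_eq_card_filter_left]
  by_cases hac : G.Adj a c
  · simp [Finset.filter_singleton, hac]
  · simp [Finset.filter_singleton, hac]

/-- the set of "uncovered" ordered pairs -/
def unc (G : SimpleGraph V) [DecidableRel G.Adj] : Finset (V × V) :=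
  ((univ ×ˢ univ).filter fun p => ¬ p.1 = p.2).filter fun p => cn G p.1 p.2 = 0

/-- Master inequality: sum of d² + n + #uncovered ≤ sum of d + n². -/
lemma master (hG : C4Free G) :
    ∑ c, (G.degree c)^2 + Fintype.card V + (unc G).card
      ≤ ∑ c, G.degree c + (Fintype.card V)^2 := by
  classical
  set P : Finset (V × V) := univ ×ˢ univ with hP
  have hPsum : ∑ p ∈ P, cn G p.1 p.2 = ∑ c, (G.degree c)^2 := by
    rw [hP, Finset.sum_product]
    rw [sum_sum_cn univ univ]
    refine Finset.sum_congr rfl fun c _ => ?_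
    rw [degree_eq_card_filter_left]; ring
  have hsplit1 : ∑ p ∈ P.filter (fun p => p.1 = p.2), cn G p.1 p.2
      + ∑ p ∈ P.filter (fun p => ¬ p.1 = p.2), cn G p.1 p.2 = ∑ c, (G.degree c)^2 := by
    rw [Finset.sum_filter_add_sum_filter_not, hPsum]
  have hdiagset : P.filter (fun p => p.1 = p.2) = univ.image (fun a => (a, a)) := by
    ext ⟨x, y⟩
    simp only [hP, Finset.mem_filter, Finset.mem_product, Finset.mem_univ, true_and,
      Finset.mem_image, and_true]
    constructor
    · intro h; exact ⟨x, by rw [h]⟩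
    · rintro ⟨a, ha⟩; cases ha; rfl
  have hinj : Function.Injective (fun a : V => (a, a)) := fun a b h => (Prod.mk.injEq _ _ _ _).mp h |>.1
  have hdiagsum : ∑ p ∈ P.filter (fun p => p.1 = p.2), cn G p.1 p.2 = ∑ c, G.degree c := by
    rw [hdiagset, Finset.sum_image (fun a _ b _ h => hinj h)]
    exact Finset.sum_congr rfl fun a _ => cn_self a
  set offd := P.filter (fun p => ¬ p.1 = p.2) with hoffd
  have hsplit2 : ∑ p ∈ offd.filter (fun p => cn G p.1 p.2 = 0), cn G p.1 p.2
      + ∑ p ∈ offd.filter (fun p => ¬ cn G p.1 p.2 = 0), cn G p.1 p.2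
      = ∑ p ∈ offd, cn G p.1 p.2 := Finset.sum_filter_add_sum_filter_not _ _ _
  have hzero : ∑ p ∈ offd.filter (fun p => cn G p.1 p.2 = 0), cn G p.1 p.2 = 0 := by
    refine Finset.sum_eq_zero fun p hp => ?_
    exact (Finset.mem_filter.mp hp).2
  have hRle : ∑ p ∈ offd.filter (fun p => ¬ cn G p.1 p.2 = 0), cn G p.1 p.2
      ≤ (offd.filter (fun p => ¬ cn G p.1 p.2 = 0)).card := by
    have := Finset.sum_le_card_nsmul (offd.filter (fun p => ¬ cn G p.1 p.2 = 0))
      (fun p => cn G p.1 p.2) 1 ?_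
    · simpa using this
    · intro p hp
      simp only [Finset.mem_filter, hoffd, hP, Finset.mem_product] at hp
      exact cn_le_one hG hp.1.2
  have hcardP : P.card = (Fintype.card V)^2 := by
    rw [hP, Finset.card_product]
    simp [Finset.card_univ]; ring
  have hcarddiag : (P.filter (fun p => p.1 = p.2)).card = Fintype.card V := by
    rw [hdiagset, Finset.card_image_of_injective _ hinj, Finset.card_univ]
  have hcard1 : (P.filter (fun p => p.1 = p.2)).card + offd.card = P.card := by
    rw [hoffd]; exact Finset.card_filter_add_card_filter_not _
  have hcard2 : (offd.filter (fun p => cn G p.1 p.2 = 0)).card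
      + (offd.filter (fun p => ¬ cn G p.1 p.2 = 0)).card = offd.card :=
    Finset.card_filter_add_card_filter_not _
  have huncdef : (unc G).card = (offd.filter (fun p => cn G p.1 p.2 = 0)).card := rfl
  omega

lemma mem_unc {p : V × V} : p ∈ unc G ↔ p.1 ≠ p.2 ∧ cn G p.1 p.2 = 0 := by
  unfold unc
  simp [Finset.mem_filter, Finset.mem_product, and_assoc]

end C4Aux

open C4Aux in
/-- Let `q ≥ 6` and let `G` be a `C₄`-free graph on `q² + q` vertices with
exactly `E₀ + 1 = q(q+1)²/2 - q + 1` edges.  Then every vertex `v` of degree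
`δ` with `2δ ≤ q + 2` (i.e. `δ ≤ q/2 + 1`) is adjacent to every vertex of
degree `q + 2`. -/
theorem small_degree_adj_all_max_degree (q : ℕ) (hq : 6 ≤ q)
    (G : SimpleGraph (Fin (q ^ 2 + q))) [DecidableRel G.Adj] (hG : C4Free G)
    (he : G.edgeFinset.card = q * (q + 1) ^ 2 / 2 - q + 1)
    (v : Fin (q ^ 2 + q)) (hv : 2 * G.degree v ≤ q + 2) :
    ∀ u, G.degree u = q + 2 → G.Adj v u := by
  intro u hu
  by_contra hadj
  classical
  have hn : Fintype.card (Fin (q ^ 2 + q)) = q ^ 2 + q := Fintype.card_fin _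
  have hvu : v ≠ u := by
    intro h; rw [h, hu] at hv; omega
  have hadj' : ¬ G.Adj u v := fun h => hadj h.symm
  set Nv := G.neighborFinset v with hNvdef
  set Nu := G.neighborFinset u with hNudef
  have hvNv : v ∉ Nv := by simp [hNvdef]
  have huNu : u ∉ Nu := by simp [hNudef]
  have hvNu : v ∉ Nu := by
    simp only [hNudef, SimpleGraph.mem_neighborFinset]; exact hadj'
  have huNv : u ∉ Nv := by
    simp only [hNvdef, SimpleGraph.mem_neighborFinset]; exact hadj
  have hNvcard : Nv.card = G.degree v := G.card_neighborFinset_eq_degree v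
  have hNucard : Nu.card = q + 2 := by
    rw [hNudef, G.card_neighborFinset_eq_degree, hu]
  clear_value Nv Nu
  -- ===== A-block =====
  set W1 := (univ.erase v).filter (fun w => cn G v w = 0) with hW1def
  set SNv := ∑ c ∈ Nv, G.degree c with hSNvdef
  have hA : q ^ 2 + q + G.degree v ≤ W1.card + SNv + 1 := by
    have h1 : (univ.erase v).card + 1 = q ^ 2 + q := by
      rw [Finset.card_erase_add_one (Finset.mem_univ v), Finset.card_univ, hn]
    have h2 : W1.card + ((univ.erase v).filter (fun w => ¬ cn G v w = 0)).card
        = (univ.erase v).card := by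
      rw [hW1def]; exact Finset.card_filter_add_card_filter_not _
    have h3 : ((univ.erase v).filter (fun w => ¬ cn G v w = 0)).card
        ≤ ∑ w ∈ (univ.erase v).filter (fun w => ¬ cn G v w = 0), cn G v w := by
      rw [Finset.card_eq_sum_ones]
      exact Finset.sum_le_sum fun w hw =>
        Nat.one_le_iff_ne_zero.mpr (Finset.mem_filter.mp hw).2
    have h4 : ∑ w ∈ (univ.erase v).filter (fun w => ¬ cn G v w = 0), cn G v w
        ≤ ∑ w ∈ univ.erase v, cn G v w :=
      Finset.sum_le_sum_of_subset (Finset.filter_subset _ _)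
    have h5 : cn G v v + ∑ w ∈ univ.erase v, cn G v w = ∑ w, cn G v w :=
      Finset.add_sum_erase _ _ (Finset.mem_univ v)
    have h6 : ∑ w, cn G v w = SNv := by
      rw [hSNvdef, hNvdef]; exact sum_cn_row v
    have h7 : cn G v v = G.degree v := cn_self v
    omega
  -- ===== C-block =====
  set unhitF := (univ.erase u).filter (fun c => cn G u c = 0) with hunhitdef
  set Hs := (univ.erase u).filter (fun c => ¬ cn G u c = 0) with hHsdef
  set SNu := ∑ c ∈ Nu, G.degree c with hSNudef
  have hHU : unhitF.card + Hs.card + 1 = q ^ 2 + q := by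
    have h1 : (univ.erase u).card + 1 = q ^ 2 + q := by
      rw [Finset.card_erase_add_one (Finset.mem_univ u), Finset.card_univ, hn]
    have h2 : unhitF.card + Hs.card = (univ.erase u).card := by
      rw [hunhitdef, hHsdef]; exact Finset.card_filter_add_card_filter_not _
    omega
  have hSNu : SNu = (q + 2) + Hs.card := by
    have h5 : cn G u u + ∑ w ∈ univ.erase u, cn G u w = ∑ w, cn G u w :=
      Finset.add_sum_erase _ _ (Finset.mem_univ u)
    have h6 : ∑ w, cn G u w = SNu := by
      rw [hSNudef, hNudef]; exact sum_cn_row u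
    have h7 : cn G u u = q + 2 := by rw [cn_self, hu]
    have h8 : ∑ w ∈ unhitF, cn G u w + ∑ w ∈ Hs, cn G u w = ∑ w ∈ univ.erase u, cn G u w := by
      rw [hunhitdef, hHsdef]; exact Finset.sum_filter_add_sum_filter_not _ _ _
    have h9 : ∑ w ∈ unhitF, cn G u w = 0 :=
      Finset.sum_eq_zero fun w hw => (Finset.mem_filter.mp hw).2
    have h10 : ∑ w ∈ Hs, cn G u w = Hs.card := by
      rw [Finset.card_eq_sum_ones]
      refine Finset.sum_congr rfl fun w hw => ?_
      have hw' := Finset.mem_filter.mp hw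
      have hne : u ≠ w := fun h => (Finset.mem_erase.mp hw'.1).1 h.symm
      have := cn_le_one hG hne
      omega
    omega
  have hc1 : unhitF.card ≤ (unhitF.erase v).card + 1 := by
    have := Finset.card_erase_le (s := unhitF) (a := v)
    by_cases hvm : v ∈ unhitF
    · have := Finset.card_erase_add_one hvm; omega
    · rw [Finset.erase_eq_of_notMem hvm]; omega
  -- ===== B-block =====
  set Qd := univ \ (insert u (insert v Nu)) with hQddef
  have hmemQd : ∀ w, w ∈ Qd ↔ w ≠ u ∧ w ≠ v ∧ w ∉ Nu := by
    intro w; rw [hQddef]; simp [Finset.mem_sdiff, not_or]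
  have huQd : u ∉ Qd := by rw [hmemQd]; tauto
  have hvQd : v ∉ Qd := by rw [hmemQd]; tauto
  have hQdNu : ∀ w ∈ Qd, w ∉ Nu := fun w hw => ((hmemQd w).mp hw).2.2
  have hQdcard : Qd.card + (q + 4) = q ^ 2 + q := by
    have h1 : (insert u (insert v Nu)).card = q + 4 := by
      rw [Finset.card_insert_of_notMem (by simp [hvu.symm, huNu]),
          Finset.card_insert_of_notMem hvNu, hNucard]
    have h2 := Finset.card_sdiff_add_card_eq_card (Finset.subset_univ (insert u (insert v Nu)))
    rw [h1] at h2; rw [hQddef]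
    rw [Finset.card_univ, hn] at h2; omega
  clear_value Qd
  set b1 := ∑ x ∈ Nu, (Qd.filter (fun w => cn G x w = 0)).card with hb1def
  set Dn := ∑ x ∈ Nu, ∑ w ∈ Qd, cn G x w with hDndef
  have hb1 : (q + 2) * Qd.card ≤ b1 + Dn := by
    have hx : ∀ x ∈ Nu, Qd.card ≤ (Qd.filter (fun w => cn G x w = 0)).card + ∑ w ∈ Qd, cn G x w := by
      intro x _
      have h2 : (Qd.filter (fun w => cn G x w = 0)).card
          + (Qd.filter (fun w => ¬ cn G x w = 0)).card = Qd.card :=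
        Finset.card_filter_add_card_filter_not _
      have h3 : (Qd.filter (fun w => ¬ cn G x w = 0)).card
          ≤ ∑ w ∈ Qd.filter (fun w => ¬ cn G x w = 0), cn G x w := by
        rw [Finset.card_eq_sum_ones]
        exact Finset.sum_le_sum fun w hw =>
          Nat.one_le_iff_ne_zero.mpr (Finset.mem_filter.mp hw).2
      have h4 : ∑ w ∈ Qd.filter (fun w => ¬ cn G x w = 0), cn G x w ≤ ∑ w ∈ Qd, cn G x w :=
        Finset.sum_le_sum_of_subset (Finset.filter_subset _ _)
      omega
    calc (q + 2) * Qd.card = ∑ _x ∈ Nu, Qd.card := by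
          rw [Finset.sum_const, hNucard, smul_eq_mul]
      _ ≤ ∑ x ∈ Nu, ((Qd.filter (fun w => cn G x w = 0)).card + ∑ w ∈ Qd, cn G x w) :=
          Finset.sum_le_sum hx
      _ = b1 + Dn := by rw [hb1def, hDndef, Finset.sum_add_distrib]
  have hacu : ∀ c, (Nu.filter (fun x => G.Adj x c)).card = cn G u c := by
    intro c
    unfold cn
    congr 1
    ext x
    simp only [Finset.mem_filter, hNudef, SimpleGraph.mem_neighborFinset, Finset.mem_univ,
      true_and]
    constructor
    · rintro ⟨h1, h2⟩; exact ⟨h1, h2.symm⟩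
    · rintro ⟨h1, h2⟩; exact ⟨h1, h2.symm⟩
  have hDle : Dn ≤ ∑ c ∈ Hs, (Qd.filter (fun w => G.Adj w c)).card := by
    have hD := sum_sum_cn (G := G) Nu Qd
    rw [← hDndef] at hD
    have hterm_u : (Nu.filter (fun x => G.Adj x u)).card * (Qd.filter (fun w => G.Adj w u)).card = 0 := by
      have : Qd.filter (fun w => G.Adj w u) = ∅ := by
        apply Finset.filter_eq_empty_iff.mpr
        intro w hw
        intro hadjwu
        exact hQdNu w hw (by rw [hNudef, SimpleGraph.mem_neighborFinset]; exact hadjwu.symm)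
      rw [this]; simp
    have hsplit := Finset.add_sum_erase univ
        (fun c => (Nu.filter (fun x => G.Adj x c)).card * (Qd.filter (fun w => G.Adj w c)).card)
        (Finset.mem_univ u)
    have hsplit2 : ∑ c ∈ unhitF, (Nu.filter (fun x => G.Adj x c)).card * (Qd.filter (fun w => G.Adj w c)).card
        + ∑ c ∈ Hs, (Nu.filter (fun x => G.Adj x c)).card * (Qd.filter (fun w => G.Adj w c)).card
        = ∑ c ∈ univ.erase u, (Nu.filter (fun x => G.Adj x c)).card * (Qd.filter (fun w => G.Adj w c)).card := by
      rw [hunhitdef, hHsdef]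
      exact Finset.sum_filter_add_sum_filter_not (univ.erase u) (fun c => cn G u c = 0)
        (fun c => (Nu.filter (fun x => G.Adj x c)).card * (Qd.filter (fun w => G.Adj w c)).card)
    have hzero2 : ∑ c ∈ unhitF, (Nu.filter (fun x => G.Adj x c)).card * (Qd.filter (fun w => G.Adj w c)).card = 0 := by
      refine Finset.sum_eq_zero fun c hc => ?_
      rw [hacu c, (Finset.mem_filter.mp hc).2]; ring
    have hle3 : ∑ c ∈ Hs, (Nu.filter (fun x => G.Adj x c)).card * (Qd.filter (fun w => G.Adj w c)).card
        ≤ ∑ c ∈ Hs, (Qd.filter (fun w => G.Adj w c)).card := by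
      refine Finset.sum_le_sum fun c hc => ?_
      have hc' := Finset.mem_filter.mp hc
      have hne : u ≠ c := fun h => (Finset.mem_erase.mp hc'.1).1 h.symm
      have h1 : (Nu.filter (fun x => G.Adj x c)).card ≤ 1 := by
        rw [hacu c]; exact cn_le_one hG hne
      calc (Nu.filter (fun x => G.Adj x c)).card * (Qd.filter (fun w => G.Adj w c)).card
          ≤ 1 * (Qd.filter (fun w => G.Adj w c)).card := Nat.mul_le_mul_right _ h1
        _ = _ := one_mul _
    omega
  have hbc : ∀ c ∈ Hs, (Qd.filter (fun w => G.Adj w c)).card + (Nu.filter (fun x => G.Adj x c)).card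
      + (if G.Adj v c then 1 else 0) ≤ G.degree c := by
    intro c _
    have hdisj : Disjoint (Qd.filter (fun w => G.Adj w c)) (Nu.filter (fun x => G.Adj x c)) := by
      rw [Finset.disjoint_left]
      intro w hw hw'
      exact hQdNu w (Finset.mem_filter.mp hw).1 (Finset.mem_filter.mp hw').1
    have hsub : (Qd.filter (fun w => G.Adj w c)) ∪ (Nu.filter (fun x => G.Adj x c))
        ⊆ univ.filter (fun x => G.Adj x c) := by
      intro w hw
      rcases Finset.mem_union.mp hw with h | h
      · exact Finset.mem_filter.mpr ⟨Finset.mem_univ _, (Finset.mem_filter.mp h).2⟩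
      · exact Finset.mem_filter.mpr ⟨Finset.mem_univ _, (Finset.mem_filter.mp h).2⟩
    have hdeg : (univ.filter (fun x => G.Adj x c)).card = G.degree c :=
      degree_eq_card_filter_left c
    by_cases hvc : G.Adj v c
    · have hvnotin : v ∉ (Qd.filter (fun w => G.Adj w c)) ∪ (Nu.filter (fun x => G.Adj x c)) := by
        rw [Finset.mem_union]
        rintro (h | h)
        · exact hvQd (Finset.mem_filter.mp h).1
        · exact hvNu (Finset.mem_filter.mp h).1
      have hsub2 : insert v ((Qd.filter (fun w => G.Adj w c)) ∪ (Nu.filter (fun x => G.Adj x c)))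
          ⊆ univ.filter (fun x => G.Adj x c) := by
        intro w hw
        rcases Finset.mem_insert.mp hw with h | h
        · subst h; exact Finset.mem_filter.mpr ⟨Finset.mem_univ _, hvc⟩
        · exact hsub h
      have hc1 := Finset.card_le_card hsub2
      rw [Finset.card_insert_of_notMem hvnotin, Finset.card_union_of_disjoint hdisj, hdeg] at hc1
      simp only [hvc, if_true]
      omega
    · have hc1 := Finset.card_le_card hsub
      rw [Finset.card_union_of_disjoint hdisj, hdeg] at hc1
      simp only [hvc, if_false]
      omega
  have hBsum : ∑ c ∈ Hs, (Qd.filter (fun w => G.Adj w c)).card + Hs.card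
      + (Hs.filter (fun c => G.Adj v c)).card ≤ ∑ c ∈ Hs, G.degree c := by
    have h1 : ∑ c ∈ Hs, ((Qd.filter (fun w => G.Adj w c)).card + (Nu.filter (fun x => G.Adj x c)).card
        + (if G.Adj v c then 1 else 0)) ≤ ∑ c ∈ Hs, G.degree c :=
      Finset.sum_le_sum hbc
    have h2 : ∑ c ∈ Hs, ((Qd.filter (fun w => G.Adj w c)).card + (Nu.filter (fun x => G.Adj x c)).card
        + (if G.Adj v c then 1 else 0))
        = ∑ c ∈ Hs, (Qd.filter (fun w => G.Adj w c)).card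
          + ∑ c ∈ Hs, (Nu.filter (fun x => G.Adj x c)).card
          + ∑ c ∈ Hs, (if G.Adj v c then 1 else 0) := by
      rw [Finset.sum_add_distrib, Finset.sum_add_distrib]
    have h3 : Hs.card ≤ ∑ c ∈ Hs, (Nu.filter (fun x => G.Adj x c)).card := by
      rw [Finset.card_eq_sum_ones]
      refine Finset.sum_le_sum fun c hc => ?_
      rw [hacu c]
      exact Nat.one_le_iff_ne_zero.mpr (Finset.mem_filter.mp hc).2
    have h4 : ∑ c ∈ Hs, (if G.Adj v c then 1 else 0) = (Hs.filter (fun c => G.Adj v c)).card := by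
      rw [Finset.card_filter]
    omega
  have hHNv : (Hs.filter (fun c => G.Adj v c)).card + (unhitF.filter (fun c => G.Adj v c)).card
      = G.degree v := by
    have hbase : (univ.erase u).filter (fun c => G.Adj v c) = Nv := by
      rw [hNvdef]
      ext c
      rw [Finset.mem_filter, Finset.mem_erase, SimpleGraph.mem_neighborFinset]
      constructor
      · rintro ⟨_, h2⟩; exact h2
      · intro h
        exact ⟨⟨fun hcu => hadj (by rwa [hcu] at h), Finset.mem_univ c⟩, h⟩
    have hsplit : ((((univ.erase u).filter (fun c => G.Adj v c))).filter (fun c => cn G u c = 0)).card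
        + ((((univ.erase u).filter (fun c => G.Adj v c))).filter (fun c => ¬ cn G u c = 0)).card
        = (((univ.erase u).filter (fun c => G.Adj v c))).card :=
      Finset.card_filter_add_card_filter_not _
    have he1 : (((univ.erase u).filter (fun c => G.Adj v c))).filter (fun c => cn G u c = 0)
        = unhitF.filter (fun c => G.Adj v c) := by
      rw [hunhitdef]
      ext c
      simp only [Finset.mem_filter, Finset.mem_erase]
      tauto
    have he2 : (((univ.erase u).filter (fun c => G.Adj v c))).filter (fun c => ¬ cn G u c = 0)
        = Hs.filter (fun c => G.Adj v c) := by
      rw [hHsdef]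
      ext c
      simp only [Finset.mem_filter, Finset.mem_erase]
      tauto
    rw [he1, he2, hbase, hNvcard] at hsplit
    omega
  have hUd : (unhitF.filter (fun c => G.Adj v c)).card ≤ ∑ c ∈ unhitF, G.degree c := by
    have h1 : (unhitF.filter (fun c => G.Adj v c)).card
        ≤ ∑ c ∈ unhitF.filter (fun c => G.Adj v c), G.degree c := by
      rw [Finset.card_eq_sum_ones]
      refine Finset.sum_le_sum fun c hc => ?_
      have hvc : G.Adj v c := (Finset.mem_filter.mp hc).2
      have : v ∈ G.neighborFinset c := by
        rw [SimpleGraph.mem_neighborFinset]; exact hvc.symm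
      have hpos : 0 < (G.neighborFinset c).card := Finset.card_pos.mpr ⟨v, this⟩
      rw [G.card_neighborFinset_eq_degree] at hpos
      omega
    exact le_trans h1 (Finset.sum_le_sum_of_subset (Finset.filter_subset _ _))
  have hHsum : ∑ c ∈ Hs, G.degree c + ∑ c ∈ unhitF, G.degree c + (q + 2) = ∑ c, G.degree c := by
    have h1 : ∑ c ∈ unhitF, G.degree c + ∑ c ∈ Hs, G.degree c = ∑ c ∈ univ.erase u, G.degree c := by
      rw [hunhitdef, hHsdef]
      exact Finset.sum_filter_add_sum_filter_not (univ.erase u) (fun c => cn G u c = 0) _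
    have h2 := Finset.add_sum_erase univ (fun c => G.degree c) (Finset.mem_univ u)
    rw [hu] at h2
    omega
  -- ===== Omega classes =====
  set A1 := W1.image (fun w => (v, w)) with hA1def
  set C1 := (unhitF.erase v).image (fun c => (u, c)) with hC1def
  set B1 := Nu.biUnion (fun x => (Qd.filter (fun w => cn G x w = 0)).image (fun w => (x, w))) with hB1def
  set A2 := A1.image Prod.swap with hA2def
  set B2 := B1.image Prod.swap with hB2def
  set C2 := C1.image Prod.swap with hC2def
  have hinjpair : ∀ a : Fin (q ^ 2 + q), Function.Injective (fun w : Fin (q ^ 2 + q) => (a, w)) := by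
    intro a x y hxy
    exact (Prod.mk.injEq _ _ _ _).mp hxy |>.2
  have hA1card : A1.card = W1.card := by
    rw [hA1def]; exact Finset.card_image_of_injective _ (hinjpair v)
  have hC1card : C1.card = (unhitF.erase v).card := by
    rw [hC1def]; exact Finset.card_image_of_injective _ (hinjpair u)
  have hB1card : B1.card = b1 := by
    rw [hB1def, hb1def]
    rw [Finset.card_biUnion]
    · exact Finset.sum_congr rfl fun x _ => Finset.card_image_of_injective _ (hinjpair x)
    · intro x _ y _ hxy
      simp only [Function.onFun]
      rw [Finset.disjoint_left]
      intro p hp hp'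
      obtain ⟨w1, _, he1⟩ := Finset.mem_image.mp hp
      obtain ⟨w2, _, he2⟩ := Finset.mem_image.mp hp'
      apply hxy
      rw [← he1] at he2
      exact ((Prod.mk.injEq _ _ _ _).mp he2).1.symm
  have hA2card : A2.card = A1.card := by
    rw [hA2def]; exact Finset.card_image_of_injective _ Prod.swap_injective
  have hB2card : B2.card = B1.card := by
    rw [hB2def]; exact Finset.card_image_of_injective _ Prod.swap_injective
  have hC2card : C2.card = C1.card := by
    rw [hC2def]; exact Finset.card_image_of_injective _ Prod.swap_injective
  -- shape lemmas
  have hA1s : ∀ p ∈ A1, p.1 = v ∧ p.2 ≠ v ∧ cn G p.1 p.2 = 0 := by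
    intro p hp
    rw [hA1def] at hp
    obtain ⟨w, hw, he⟩ := Finset.mem_image.mp hp
    rw [hW1def] at hw
    have hw1 := Finset.mem_filter.mp hw
    have hw2 := Finset.mem_erase.mp hw1.1
    subst he
    exact ⟨rfl, hw2.1, hw1.2⟩
  have hB1s : ∀ p ∈ B1, p.1 ∈ Nu ∧ p.2 ∈ Qd ∧ cn G p.1 p.2 = 0 := by
    intro p hp
    rw [hB1def] at hp
    obtain ⟨x, hx, hp2⟩ := Finset.mem_biUnion.mp hp
    obtain ⟨w, hw, he⟩ := Finset.mem_image.mp hp2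
    have hw1 := Finset.mem_filter.mp hw
    subst he
    exact ⟨hx, hw1.1, hw1.2⟩
  have hC1s : ∀ p ∈ C1, p.1 = u ∧ p.2 ≠ v ∧ p.2 ≠ u ∧ cn G p.1 p.2 = 0 := by
    intro p hp
    rw [hC1def] at hp
    obtain ⟨c, hc, he⟩ := Finset.mem_image.mp hp
    have hc1 := Finset.mem_erase.mp hc
    rw [hunhitdef] at hc1
    have hc2 := Finset.mem_filter.mp hc1.2
    have hc3 := Finset.mem_erase.mp hc2.1
    subst he
    exact ⟨rfl, hc1.1, hc3.1, hc2.2⟩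
  have hswapmem : ∀ (X : Finset ((Fin (q^2+q)) × (Fin (q^2+q)))) (p : (Fin (q^2+q)) × (Fin (q^2+q))),
      p ∈ X.image Prod.swap → p.swap ∈ X := by
    intro X p hp
    obtain ⟨r, hr, he⟩ := Finset.mem_image.mp hp
    have : r = p.swap := by rw [← he]; simp
    rwa [this] at hr
  have hA2s : ∀ p ∈ A2, p.2 = v ∧ p.1 ≠ v ∧ cn G p.1 p.2 = 0 := by
    intro p hp
    have := hA1s p.swap (hswapmem A1 p (hA2def ▸ hp))
    exact ⟨this.1, this.2.1, by rw [cn_comm]; exact this.2.2⟩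
  have hB2s : ∀ p ∈ B2, p.1 ∈ Qd ∧ p.2 ∈ Nu ∧ cn G p.1 p.2 = 0 := by
    intro p hp
    have := hB1s p.swap (hswapmem B1 p (hB2def ▸ hp))
    exact ⟨this.2.1, this.1, by rw [cn_comm]; exact this.2.2⟩
  have hC2s : ∀ p ∈ C2, p.2 = u ∧ p.1 ≠ v ∧ p.1 ≠ u ∧ cn G p.1 p.2 = 0 := by
    intro p hp
    have := hC1s p.swap (hswapmem C1 p (hC2def ▸ hp))
    exact ⟨this.1, this.2.1, this.2.2.1, by rw [cn_comm]; exact this.2.2.2⟩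
  have hQdNu' : ∀ w ∈ Qd, w ∉ Nu := hQdNu
  have huQd' : u ∉ Qd := huQd
  -- subset of unc
  have hsubU : A1 ∪ A2 ∪ B1 ∪ B2 ∪ C1 ∪ C2 ⊆ unc G := by
    intro p hp
    rw [mem_unc]
    simp only [Finset.mem_union] at hp
    rcases hp with ((((hp | hp) | hp) | hp) | hp) | hp
    · obtain ⟨h1, h2, h3⟩ := hA1s p hp
      exact ⟨fun h => h2 (by rw [← h, h1]), h3⟩
    · obtain ⟨h1, h2, h3⟩ := hA2s p hp
      exact ⟨fun h => h2 (by rw [h, h1]), h3⟩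
    · obtain ⟨h1, h2, h3⟩ := hB1s p hp
      exact ⟨fun h => hQdNu p.2 h2 (by rw [← h]; exact h1), h3⟩
    · obtain ⟨h1, h2, h3⟩ := hB2s p hp
      exact ⟨fun h => hQdNu p.1 h1 (by rw [h]; exact h2), h3⟩
    · obtain ⟨h1, h2, h3, h4⟩ := hC1s p hp
      exact ⟨fun h => h3 (by rw [← h, h1]), h4⟩
    · obtain ⟨h1, h2, h3, h4⟩ := hC2s p hp
      exact ⟨fun h => h3 (by rw [h, h1]), h4⟩
  -- pairwise disjoint
  have dA1A2 : Disjoint A1 A2 := Finset.disjoint_left.mpr (by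
    intro p hp hp'
    exact (hA2s p hp').2.1 (hA1s p hp).1)
  have dA1B1 : Disjoint A1 B1 := Finset.disjoint_left.mpr (by
    intro p hp hp'
    exact hvNu ((hA1s p hp).1 ▸ (hB1s p hp').1)
    )
  have dA1B2 : Disjoint A1 B2 := Finset.disjoint_left.mpr (by
    intro p hp hp'
    exact hvQd ((hA1s p hp).1 ▸ (hB2s p hp').1))
  have dA1C1 : Disjoint A1 C1 := Finset.disjoint_left.mpr (by
    intro p hp hp'
    exact hvu ((hA1s p hp).1.symm.trans (hC1s p hp').1))
  have dA1C2 : Disjoint A1 C2 := Finset.disjoint_left.mpr (by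
    intro p hp hp'
    exact (hC2s p hp').2.1 (hA1s p hp).1)
  have dA2B1 : Disjoint A2 B1 := Finset.disjoint_left.mpr (by
    intro p hp hp'
    exact hvQd ((hA2s p hp).1 ▸ (hB1s p hp').2.1))
  have dA2B2 : Disjoint A2 B2 := Finset.disjoint_left.mpr (by
    intro p hp hp'
    exact hvNu ((hA2s p hp).1 ▸ (hB2s p hp').2.1))
  have dA2C1 : Disjoint A2 C1 := Finset.disjoint_left.mpr (by
    intro p hp hp'
    exact (hC1s p hp').2.1 (hA2s p hp).1)
  have dA2C2 : Disjoint A2 C2 := Finset.disjoint_left.mpr (by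
    intro p hp hp'
    exact hvu ((hA2s p hp).1.symm.trans (hC2s p hp').1))
  have dB1B2 : Disjoint B1 B2 := Finset.disjoint_left.mpr (by
    intro p hp hp'
    exact hQdNu p.1 (hB2s p hp').1 (hB1s p hp).1)
  have dB1C1 : Disjoint B1 C1 := Finset.disjoint_left.mpr (by
    intro p hp hp'
    exact huNu ((hC1s p hp').1 ▸ (hB1s p hp).1))
  have dB1C2 : Disjoint B1 C2 := Finset.disjoint_left.mpr (by
    intro p hp hp'
    exact huQd ((hC2s p hp').1 ▸ (hB1s p hp).2.1))
  have dB2C1 : Disjoint B2 C1 := Finset.disjoint_left.mpr (by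
    intro p hp hp'
    exact huQd ((hC1s p hp').1 ▸ (hB2s p hp).1))
  have dB2C2 : Disjoint B2 C2 := Finset.disjoint_left.mpr (by
    intro p hp hp'
    exact huNu ((hC2s p hp').1 ▸ (hB2s p hp).2.1))
  have dC1C2 : Disjoint C1 C2 := Finset.disjoint_left.mpr (by
    intro p hp hp'
    exact (hC2s p hp').2.2.1 (hC1s p hp).1)
  have hcardsum : (A1 ∪ A2 ∪ B1 ∪ B2 ∪ C1 ∪ C2).card
      = A1.card + A2.card + B1.card + B2.card + C1.card + C2.card := by
    rw [Finset.card_union_of_disjoint (by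
      refine Finset.disjoint_union_left.mpr ⟨?_, ?_⟩
      · refine Finset.disjoint_union_left.mpr ⟨?_, ?_⟩
        · refine Finset.disjoint_union_left.mpr ⟨?_, ?_⟩
          · exact Finset.disjoint_union_left.mpr ⟨dA1C2, dA2C2⟩
          · exact dB1C2
        · exact dB2C2
      · exact dC1C2)]
    rw [Finset.card_union_of_disjoint (by
      refine Finset.disjoint_union_left.mpr ⟨?_, ?_⟩
      · refine Finset.disjoint_union_left.mpr ⟨?_, ?_⟩
        · exact Finset.disjoint_union_left.mpr ⟨dA1C1, dA2C1⟩
        · exact dB1C1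
      · exact dB2C1)]
    rw [Finset.card_union_of_disjoint (by
      refine Finset.disjoint_union_left.mpr ⟨?_, ?_⟩
      · exact Finset.disjoint_union_left.mpr ⟨dA1B2, dA2B2⟩
      · exact dB1B2)]
    rw [Finset.card_union_of_disjoint
      (Finset.disjoint_union_left.mpr ⟨dA1B1, dA2B1⟩)]
    rw [Finset.card_union_of_disjoint dA1A2]
  have hOmega : 2 * W1.card + 2 * b1 + 2 * (unhitF.erase v).card ≤ (unc G).card := by
    have h1 := Finset.card_le_card hsubU
    rw [hcardsum] at h1
    omega
  -- ===== integer part =====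
  have hq6 : (6:ℤ) ≤ (q:ℤ) := by exact_mod_cast hq
  have hvz : 2 * ((G.degree v : ℤ)) ≤ (q:ℤ) + 2 := by exact_mod_cast hv
  -- degree sum value
  have hSdnat : ∑ c, G.degree c + 2 * q = q * (q + 1) ^ 2 + 2 := by
    have h1 : ∑ c, G.degree c = 2 * G.edgeFinset.card := G.sum_degrees_eq_twice_card_edges
    have h2 : 2 * (q * (q + 1) ^ 2 / 2) = q * (q + 1) ^ 2 := by
      rw [Nat.two_mul_div_two_of_even]
      have h3 : Even (q * (q + 1)) := Nat.even_mul_succ_self q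
      have h4 : q * (q + 1) ^ 2 = q * (q + 1) * (q + 1) := by ring
      rw [h4]
      exact h3.mul_right _
    have h5 : q ≤ q * (q + 1) ^ 2 / 2 := by
      rw [Nat.le_div_iff_mul_le (by norm_num)]
      have : 2 ≤ (q + 1) ^ 2 := by
        have h7 : 7 ≤ q + 1 := by omega
        calc 2 ≤ 7*7 := by norm_num
          _ ≤ (q+1)*(q+1) := Nat.mul_le_mul h7 h7
          _ = (q+1)^2 := by ring
      calc q * 2 ≤ q * (q + 1) ^ 2 := Nat.mul_le_mul_left q this
        _ = _ := rfl
    rw [h1, he]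
    omega
  have hSdz : ∑ c, (G.degree c : ℤ) + 2 * (q:ℤ) = (q:ℤ) * ((q:ℤ) + 1) ^ 2 + 2 := by
    exact_mod_cast hSdnat
  -- master cast
  have hmaster := master hG
  rw [hn] at hmaster
  have hmasterz : ∑ c, (G.degree c : ℤ)^2 + ((q:ℤ)^2 + q) + ((unc G).card : ℤ)
      ≤ ∑ c, (G.degree c : ℤ) + ((q:ℤ)^2 + q)^2 := by exact_mod_cast hmaster
  -- epsilon sums
  have hgid : ∑ c, ((G.degree c : ℤ) - ((q:ℤ)+1))^2
      = ∑ c, (G.degree c : ℤ)^2 - 2*((q:ℤ)+1) * ∑ c, (G.degree c : ℤ)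
        + ((q:ℤ)^2 + q)*((q:ℤ)+1)^2 := by
    have h1 : ∑ c, ((G.degree c : ℤ) - ((q:ℤ)+1))^2
        = ∑ c, ((G.degree c : ℤ)^2 - 2*((q:ℤ)+1)*(G.degree c : ℤ) + ((q:ℤ)+1)^2) :=
      Finset.sum_congr rfl fun c _ => by ring
    rw [h1, Finset.sum_add_distrib, Finset.sum_sub_distrib, ← Finset.mul_sum,
      Finset.sum_const, Finset.card_univ, hn, nsmul_eq_mul]
    push_cast
    ring
  -- split of the epsilon-square sum
  have hkovl : (Nv ∩ Nu).card ≤ 1 := by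
    apply Finset.card_le_one.mpr
    intro a ha b hb
    rw [Finset.mem_inter, hNvdef, hNudef, SimpleGraph.mem_neighborFinset,
      SimpleGraph.mem_neighborFinset] at ha hb
    exact hG v u hvu ⟨ha.1, ha.2⟩ ⟨hb.1, hb.2⟩
  have hvS : v ∉ insert u (Nv ∪ Nu) := by
    simp only [Finset.mem_insert, Finset.mem_union]
    push_neg
    exact ⟨hvu, hvNv, hvNu⟩
  have huS : u ∉ Nv ∪ Nu := by
    simp only [Finset.mem_union]
    push_neg
    exact ⟨huNv, huNu⟩
  have hsplitg : ((G.degree v : ℤ) - ((q:ℤ)+1))^2 + ((G.degree u : ℤ) - ((q:ℤ)+1))^2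
      + ∑ c ∈ Nv \ Nu, ((G.degree c : ℤ) - ((q:ℤ)+1))^2
      + ∑ c ∈ Nv ∩ Nu, ((G.degree c : ℤ) - ((q:ℤ)+1))^2
      + ∑ c ∈ Nu \ Nv, ((G.degree c : ℤ) - ((q:ℤ)+1))^2
      ≤ ∑ c, ((G.degree c : ℤ) - ((q:ℤ)+1))^2 := by
    have h1 : ∑ c ∈ insert v (insert u (Nv ∪ Nu)), ((G.degree c : ℤ) - ((q:ℤ)+1))^2
        ≤ ∑ c, ((G.degree c : ℤ) - ((q:ℤ)+1))^2 :=
      Finset.sum_le_sum_of_subset_of_nonneg (Finset.subset_univ _)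
        (fun c _ _ => sq_nonneg _)
    rw [Finset.sum_insert hvS, Finset.sum_insert huS] at h1
    have h3 : ∑ c ∈ Nv ∪ Nu, ((G.degree c : ℤ) - ((q:ℤ)+1))^2
        + ∑ c ∈ Nv ∩ Nu, ((G.degree c : ℤ) - ((q:ℤ)+1))^2
        = ∑ c ∈ Nv, ((G.degree c : ℤ) - ((q:ℤ)+1))^2
        + ∑ c ∈ Nu, ((G.degree c : ℤ) - ((q:ℤ)+1))^2 :=
      Finset.sum_union_inter
    have h4 : ∑ c ∈ Nv \ (Nv ∩ Nu), ((G.degree c : ℤ) - ((q:ℤ)+1))^2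
        + ∑ c ∈ Nv ∩ Nu, ((G.degree c : ℤ) - ((q:ℤ)+1))^2
        = ∑ c ∈ Nv, ((G.degree c : ℤ) - ((q:ℤ)+1))^2 :=
      Finset.sum_sdiff Finset.inter_subset_left
    have h5 : ∑ c ∈ Nu \ (Nu ∩ Nv), ((G.degree c : ℤ) - ((q:ℤ)+1))^2
        + ∑ c ∈ Nu ∩ Nv, ((G.degree c : ℤ) - ((q:ℤ)+1))^2
        = ∑ c ∈ Nu, ((G.degree c : ℤ) - ((q:ℤ)+1))^2 :=
      Finset.sum_sdiff Finset.inter_subset_left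
    rw [Finset.sdiff_inter_self_left] at h4 h5
    rw [Finset.inter_comm Nu Nv] at h5
    linarith only [h1, h3, h4, h5]
  have hTlb1 : ∀ T : Finset (Fin (q^2+q)),
      2 * (∑ c ∈ T, ((G.degree c:ℤ) - ((q:ℤ)+1))) - T.card
        ≤ ∑ c ∈ T, ((G.degree c:ℤ) - ((q:ℤ)+1))^2 := by
    intro T
    have h1 : ∑ c ∈ T, (2 * ((G.degree c:ℤ) - ((q:ℤ)+1)) - 1)
        ≤ ∑ c ∈ T, ((G.degree c:ℤ) - ((q:ℤ)+1))^2 :=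
      Finset.sum_le_sum fun c _ => by
        nlinarith only [sq_nonneg (((G.degree c:ℤ) - ((q:ℤ)+1)) - 1)]
    rw [Finset.sum_sub_distrib, ← Finset.mul_sum, Finset.sum_const, nsmul_eq_mul, mul_one] at h1
    exact h1
  have hTlb2 : ∀ T : Finset (Fin (q^2+q)),
      -(2 * (∑ c ∈ T, ((G.degree c:ℤ) - ((q:ℤ)+1)))) - T.card
        ≤ ∑ c ∈ T, ((G.degree c:ℤ) - ((q:ℤ)+1))^2 := by
    intro T
    have h1 : ∑ c ∈ T, (-(2 * ((G.degree c:ℤ) - ((q:ℤ)+1))) - 1)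
        ≤ ∑ c ∈ T, ((G.degree c:ℤ) - ((q:ℤ)+1))^2 :=
      Finset.sum_le_sum fun c _ => by
        nlinarith only [sq_nonneg (((G.degree c:ℤ) - ((q:ℤ)+1)) + 1)]
    rw [Finset.sum_sub_distrib, Finset.sum_neg_distrib, ← Finset.mul_sum, Finset.sum_const,
      nsmul_eq_mul, mul_one] at h1
    exact h1
  have hovlsq : (∑ c ∈ Nv ∩ Nu, ((G.degree c:ℤ) - ((q:ℤ)+1)))^2
      ≤ ∑ c ∈ Nv ∩ Nu, ((G.degree c:ℤ) - ((q:ℤ)+1))^2 := by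
    haveI : Nonempty (Fin (q^2+q)) := ⟨v⟩
    obtain ⟨x, hx⟩ := Finset.card_le_one_iff_subset_singleton.mp hkovl
    rcases Finset.subset_singleton_iff.mp hx with h | h
    · rw [h]; simp
    · rw [h]; simp
  have hsumNvz : ∑ c ∈ Nv, ((G.degree c:ℤ) - ((q:ℤ)+1))
      = (SNv:ℤ) - (G.degree v:ℤ) * ((q:ℤ)+1) := by
    rw [Finset.sum_sub_distrib, Finset.sum_const, nsmul_eq_mul, hNvcard]
    have : ∑ c ∈ Nv, (G.degree c:ℤ) = (SNv:ℤ) := by rw [hSNvdef]; push_cast; rfl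
    rw [this]
  have hsumNuz : ∑ c ∈ Nu, ((G.degree c:ℤ) - ((q:ℤ)+1))
      = (SNu:ℤ) - ((q:ℤ)+2) * ((q:ℤ)+1) := by
    rw [Finset.sum_sub_distrib, Finset.sum_const, nsmul_eq_mul, hNucard]
    have : ∑ c ∈ Nu, (G.degree c:ℤ) = (SNu:ℤ) := by rw [hSNudef]; push_cast; rfl
    rw [this]
    push_cast
    ring
  have hsd3 : ∑ c ∈ Nv \ Nu, ((G.degree c:ℤ) - ((q:ℤ)+1))
      + ∑ c ∈ Nv ∩ Nu, ((G.degree c:ℤ) - ((q:ℤ)+1))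
      = ∑ c ∈ Nv, ((G.degree c:ℤ) - ((q:ℤ)+1)) := by
    have h := Finset.sum_sdiff (f := fun c => ((G.degree c:ℤ) - ((q:ℤ)+1)))
      (Finset.inter_subset_left : Nv ∩ Nu ⊆ Nv)
    rwa [Finset.sdiff_inter_self_left] at h
  have hsd5 : ∑ c ∈ Nu \ Nv, ((G.degree c:ℤ) - ((q:ℤ)+1))
      + ∑ c ∈ Nv ∩ Nu, ((G.degree c:ℤ) - ((q:ℤ)+1))
      = ∑ c ∈ Nu, ((G.degree c:ℤ) - ((q:ℤ)+1)) := by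
    have h := Finset.sum_sdiff (f := fun c => ((G.degree c:ℤ) - ((q:ℤ)+1)))
      (Finset.inter_subset_left : Nu ∩ Nv ⊆ Nu)
    rw [Finset.sdiff_inter_self_left] at h
    rwa [Finset.inter_comm Nu Nv] at h
  have hcard3 : (Nv \ Nu).card + (Nv ∩ Nu).card = G.degree v := by
    rw [Finset.card_sdiff_add_card_inter, hNvcard]
  have hcard5 : (Nu \ Nv).card + (Nv ∩ Nu).card = q + 2 := by
    rw [Finset.inter_comm Nv Nu, Finset.card_sdiff_add_card_inter, hNucard]
  have hguz : ((G.degree u:ℤ) - ((q:ℤ)+1))^2 = 1 := by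
    rw [hu]; push_cast; ring
  -- final assembly
  have hSdval : ∑ c, (G.degree c:ℤ) = (q:ℤ)*((q:ℤ)+1)^2 - 2*(q:ℤ) + 2 := by
    linarith only [hSdz]
  rw [hSdval] at hmasterz hgid
  have hbudget : ∑ c, ((G.degree c:ℤ) - ((q:ℤ)+1))^2 + ((unc G).card : ℤ)
      ≤ 3*(q:ℤ)^2 - 3*(q:ℤ) - 2 := by nlinarith only [hmasterz, hgid]
  have zA := hA; zify at zA
  have zHU := hHU; zify at zHU
  have zSNu := hSNu; zify at zSNu
  have zc1' := hc1; zify at zc1'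
  have zQd := hQdcard; zify at zQd
  have zb1 := hb1; zify at zb1
  have zDle := hDle; zify at zDle; push_cast at zDle
  have zBsum := hBsum; zify at zBsum; push_cast at zBsum
  have zHNv := hHNv; zify at zHNv
  have zUd := hUd; zify at zUd; push_cast at zUd
  have zHsum := hHsum; zify at zHsum; push_cast at zHsum
  rw [hSdval] at zHsum
  have zOmega := hOmega; zify at zOmega
  have zkovl : ((Nv ∩ Nu).card : ℤ) ≤ 1 := by exact_mod_cast hkovl
  have zcard3 := hcard3; zify at zcard3
  have zcard5 := hcard5; zify at zcard5
  have hQcval : ((Qd.card : ℕ) : ℤ) = (q:ℤ)^2 - 4 := by push_cast; linarith only [zQd]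
  rw [hQcval] at zb1
  rw [hguz] at hsplitg
  have hUpos : (0:ℤ) ≤ (unhitF.card : ℤ) := Int.natCast_nonneg _
  have hkpos : (0:ℤ) ≤ ((Nv ∩ Nu).card : ℤ) := Int.natCast_nonneg _
  have hprod : (0:ℤ) ≤ ((q:ℤ) + 2 - 2*(G.degree v:ℤ)) * (7*(q:ℤ) - 2*(G.degree v:ℤ)) :=
    mul_nonneg (by linarith only [hvz]) (by linarith only [hvz, hq6])
  have hq2 : (6:ℤ)*(q:ℤ) ≤ (q:ℤ)*(q:ℤ) :=
    mul_le_mul_of_nonneg_right hq6 (by linarith only [hq6])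
  have hsigsq : (0:ℤ) ≤ (∑ c ∈ Nv ∩ Nu, ((G.degree c:ℤ) - ((q:ℤ)+1)))^2 := sq_nonneg _
  have hp5 := hTlb2 (Nu \ Nv)
  rcases le_or_gt 0 (∑ c ∈ Nv \ Nu, ((G.degree c:ℤ) - ((q:ℤ)+1))) with hE | hE
  · have hp3 := hTlb1 (Nv \ Nu)
    linarith only [hbudget, hsplitg, hovlsq, hsumNvz, hsumNuz, hsd3, hsd5, zcard3, zcard5,
      zkovl, hkpos, zA, zHU, zSNu, zc1', zb1, zDle, zBsum, zHNv, zUd, zHsum, zOmega,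
      hUpos, hvz, hq6, hprod, hq2, hsigsq, hp3, hp5, hE]
  · have hp3 := hTlb2 (Nv \ Nu)
    linarith only [hbudget, hsplitg, hovlsq, hsumNvz, hsumNuz, hsd3, hsd5, zcard3, zcard5,
      zkovl, hkpos, zA, zHU, zSNu, zc1', zb1, zDle, zBsum, zHNv, zUd, zHsum, zOmega,
      hUpos, hvz, hq6, hprod, hq2, hsigsq, hp3, hp5, hE]
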